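/- Multi-step energy stability: under the setting of the one-step energy dissipation theorem, let N ≥ 1 and suppose (cⁿ)_{n=0}^{N} and (μⁿ)_{n=1}^{N} in V satisfy, for each n = 0, …, N−1, (i) ∫(c^{n+1} − cⁿ)·v dm = −Mτ·a(μ^{n+1}, v) for all v ∈ V and (ii) ∫ μ^{n+1}·q dm = β_s∫(c^{n+1} − cⁿ)·q dm + ∫ f₀'(cⁿ)·q dm + ε²·a(c^{n+1}, q) for all q ∈ V. Then E(c^N) + Σ_{n=0}^{N−1} [ (ε²/2)·a(c^{n+1} − cⁿ, c^{n+1} − cⁿ) + Mτ·a(μ^{n+1}, μ^{n+1}) ] ≤ E(c⁰); in particular the discrete energies are monotone: E(c^{n+1}) ≤ E(cⁿ) for all n, and Mτ·Σ_{n=0}^{N−1} a(μ^{n+1}, μ^{n+1}) ≤ E(c⁰). -/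

import Mathlib

open MeasureTheory

/-- The regularized Landau–Lifshitz double-well potential with cutoff parameter `K`. -/
noncomputable def f0 (K c : ℝ) : ℝ :=
  if K < c then (3*K^2 - 1)/2 * c^2 - 2*K^3*c + (3*K^4 + 1)/4
  else if c < -K then (3*K^2 - 1)/2 * c^2 + 2*K^3*c + (3*K^4 + 1)/4
  else ((c^2 - 1)^2)/4

/-- Its derivative. -/
noncomputable def f0' (K c : ℝ) : ℝ :=
  if K < c then (3*K^2 - 1)*c - 2*K^3
  else if c < -K then (3*K^2 - 1)*c + 2*K^3
  else c^3 - c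

/-- The discrete energy `E(c) = (ε²/2)·a(c,c) + ∫ f₀(c) dm`. -/
noncomputable def discreteEnergy {X : Type*} [MeasurableSpace X] {m : Measure X}
    (K ε : ℝ) {V : Submodule ℝ (Lp ℝ 2 m)} (a : V →ₗ[ℝ] V →ₗ[ℝ] ℝ) (c : V) : ℝ :=
  ε^2/2 * a c c + ∫ x, f0 K ((c : Lp ℝ 2 m) x) ∂m

section Aux

lemma f0_nonneg {K : ℝ} (hK : 1 ≤ K) (c : ℝ) : 0 ≤ f0 K c := by
  have hK2 : 1 ≤ K^2 := by nlinarith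
  unfold f0
  split_ifs with h1 h2
  · nlinarith [sq_nonneg ((3*K^2-1)*c - 2*K^3),
      mul_nonneg (mul_nonneg (sub_nonneg.2 hK2) (sub_nonneg.2 hK2)) (sub_nonneg.2 hK2)]
  · nlinarith [sq_nonneg ((3*K^2-1)*c + 2*K^3),
      mul_nonneg (mul_nonneg (sub_nonneg.2 hK2) (sub_nonneg.2 hK2)) (sub_nonneg.2 hK2)]
  · positivity

lemma f0_le {K : ℝ} (hK : 1 ≤ K) (c : ℝ) : f0 K c ≤ 1/4 + (3*K^2-1)/2 * (c*c) := by
  unfold f0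
  split_ifs with h1 h2
  · nlinarith [mul_le_mul_of_nonneg_left h1.le (by positivity : (0:ℝ) ≤ K^3), sq_nonneg (K^2)]
  · nlinarith [mul_le_mul_of_nonneg_left h2.le (by positivity : (0:ℝ) ≤ K^3), sq_nonneg (K^2)]
  · push_neg at h1 h2
    nlinarith [sq_nonneg c, sq_nonneg (c^2-1), mul_nonneg (sub_nonneg.2 h2) (sub_nonneg.2 h1),
      sq_nonneg (K*c)]

lemma abs_f0' {K : ℝ} (hK : 1 ≤ K) (c : ℝ) : |f0' K c| ≤ (3*K^2-1) * |c| := by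
  have hK2 : 1 ≤ K^2 := by nlinarith
  unfold f0'
  split_ifs with h1 h2
  · rw [abs_of_pos (by nlinarith), abs_of_pos (by nlinarith)]
    nlinarith
  · rw [abs_of_neg (by nlinarith), abs_of_neg (by nlinarith)]
    nlinarith
  · push_neg at h1 h2
    rw [abs_le]
    rcases abs_cases c with ⟨h, _⟩ | ⟨h, _⟩ <;> rw [h] <;> constructor <;>
      nlinarith [sq_nonneg c, mul_nonneg (sub_nonneg.2 h2) (sub_nonneg.2 h1)]

lemma f0_midmid {K : ℝ} (hK : 1 ≤ K) {x y : ℝ} (hx1 : -K ≤ x) (hx2 : x ≤ K)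
    (hy1 : -K ≤ y) (hy2 : y ≤ K) :
    (y^2-1)^2/4 ≤ (x^2-1)^2/4 + (x^3-x)*(y-x) + (3*K^2-1)/2*(y-x)^2 := by
  have h1 : x^2 ≤ K^2 := by nlinarith
  have h2 : (x+y)^2 ≤ 4*K^2 := by nlinarith
  nlinarith [mul_nonneg (sq_nonneg (y-x)) (sub_nonneg.2 h1),
    mul_nonneg (sq_nonneg (y-x)) (sub_nonneg.2 h2)]

lemma f0_taylor {K : ℝ} (hK : 1 ≤ K) (a b : ℝ) :
    f0 K b ≤ f0 K a + f0' K a * (b - a) + (3*K^2-1)/2 * (b - a)^2 := by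
  have hK2 : 1 ≤ K^2 := by nlinarith
  rcases lt_or_ge K a with ha1 | ha1
  · rcases lt_or_ge K b with hb1 | hb1
    · simp only [f0, f0', if_pos ha1, if_pos hb1]; nlinarith [sq_nonneg (b-a)]
    · rcases lt_or_ge b (-K) with hb2 | hb2
      · simp only [f0, f0', if_pos ha1, if_neg (not_lt.2 hb1), if_pos hb2]
        nlinarith [mul_pos (show (0:ℝ) < -b by linarith) (show (0:ℝ) < K^3 by positivity)]
      · simp only [f0, f0', if_pos ha1, if_neg (not_lt.2 hb1), if_neg (not_lt.2 hb2)]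
        nlinarith [mul_nonneg (mul_nonneg (sq_nonneg (b-K)) (sub_nonneg.2 hb1))
          (show (0:ℝ) ≤ 3*K+b by linarith)]
  · rcases lt_or_ge a (-K) with ha2 | ha2
    · rcases lt_or_ge K b with hb1 | hb1
      · simp only [f0, f0', if_neg (not_lt.2 ha1), if_pos ha2, if_pos hb1]
        nlinarith [mul_pos (show (0:ℝ) < b by linarith) (show (0:ℝ) < K^3 by positivity)]
      · rcases lt_or_ge b (-K) with hb2 | hb2
        · simp only [f0, f0', if_neg (not_lt.2 ha1), if_pos ha2, if_neg (not_lt.2 hb1),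
            if_pos hb2]
          nlinarith [sq_nonneg (b-a)]
        · simp only [f0, f0', if_neg (not_lt.2 ha1), if_pos ha2, if_neg (not_lt.2 hb1),
            if_neg (not_lt.2 hb2)]
          nlinarith [mul_nonneg (mul_nonneg (sq_nonneg (b+K)) (sub_nonneg.2 hb2))
            (show (0:ℝ) ≤ 3*K-b by linarith)]
    · rcases lt_or_ge K b with hb1 | hb1
      · simp only [f0, f0', if_neg (not_lt.2 ha1), if_neg (not_lt.2 ha2), if_pos hb1]
        have hm := f0_midmid hK ha2 ha1 (show -K ≤ K by linarith) (le_refl K)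
        nlinarith [hm, mul_nonneg (sub_nonneg.2 hb1.le)
          (mul_nonneg (sq_nonneg (a-K)) (show (0:ℝ) ≤ a+2*K by linarith))]
      · rcases lt_or_ge b (-K) with hb2 | hb2
        · simp only [f0, f0', if_neg (not_lt.2 ha1), if_neg (not_lt.2 ha2),
            if_neg (not_lt.2 hb1), if_pos hb2]
          have hm := f0_midmid hK ha2 ha1 (le_refl (-K)) (by linarith : -K ≤ K)
          nlinarith [hm, mul_nonneg (mul_nonneg (sq_nonneg (a+K))
            (show (0:ℝ) ≤ 2*K-a by linarith)) (show (0:ℝ) ≤ -K-b by linarith)]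
        · simp only [f0, f0', if_neg (not_lt.2 ha1), if_neg (not_lt.2 ha2),
            if_neg (not_lt.2 hb1), if_neg (not_lt.2 hb2)]
          exact f0_midmid hK ha2 ha1 hb2 hb1

lemma measurable_f0 (K : ℝ) : Measurable (f0 K) :=
  Measurable.ite (measurableSet_lt measurable_const measurable_id) (by fun_prop)
    (Measurable.ite (measurableSet_lt measurable_id measurable_const) (by fun_prop) (by fun_prop))

lemma measurable_f0' (K : ℝ) : Measurable (f0' K) :=
  Measurable.ite (measurableSet_lt measurable_const measurable_id) (by fun_prop)
    (Measurable.ite (measurableSet_lt measurable_id measurable_const) (by fun_prop) (by fun_prop))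

variable {X : Type*} [MeasurableSpace X] {m : Measure X} [IsFiniteMeasure m]

lemma int_mul (f g : Lp ℝ 2 m) : Integrable (fun x => f x * g x) m := by
  simpa using L2.integrable_inner (𝕜 := ℝ) g f

lemma int_f0comp {K : ℝ} (hK : 1 ≤ K) (f : Lp ℝ 2 m) :
    Integrable (fun x => f0 K (f x)) m := by
  have hb : Integrable (fun x => 1/4 + (3*K^2-1)/2 * (f x * f x)) m :=
    (integrable_const _).add ((int_mul f f).const_mul _)
  refine hb.mono' ((measurable_f0 K).comp_aemeasurable
    (Lp.aestronglyMeasurable f).aemeasurable).aestronglyMeasurable ?_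
  filter_upwards with x
  rw [Real.norm_eq_abs, abs_of_nonneg (f0_nonneg hK _)]
  exact f0_le hK (f x)

lemma int_f0'mul {K : ℝ} (hK : 1 ≤ K) (f g : Lp ℝ 2 m) :
    Integrable (fun x => f0' K (f x) * g x) m := by
  have hb : Integrable (fun x => (3*K^2-1) * ‖f x * g x‖) m := (int_mul f g).norm.const_mul _
  refine hb.mono' (((measurable_f0' K).comp_aemeasurable
    (Lp.aestronglyMeasurable f).aemeasurable).aestronglyMeasurable.mul
    (Lp.aestronglyMeasurable g)) ?_
  filter_upwards with x
  rw [Real.norm_eq_abs, abs_mul, Real.norm_eq_abs, abs_mul, ← mul_assoc]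
  exact mul_le_mul_of_nonneg_right (abs_f0' hK (f x)) (abs_nonneg _)

lemma int_sq_diff (f g : Lp ℝ 2 m) : Integrable (fun x => (g x - f x)^2) m := by
  have : (fun x => (g x - f x)^2) = fun x => g x * g x - 2*(g x * f x) + f x * f x :=
    funext fun x => by ring
  rw [this]
  exact ((int_mul g g).sub ((int_mul g f).const_mul 2)).add (int_mul f f)

lemma int_f0'_diff {K : ℝ} (hK : 1 ≤ K) (f g : Lp ℝ 2 m) :
    Integrable (fun x => f0' K (f x) * (g x - f x)) m := by
  have : (fun x => f0' K (f x) * (g x - f x))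
      = fun x => f0' K (f x) * g x - f0' K (f x) * f x := funext fun x => by ring
  rw [this]
  exact (int_f0'mul hK f g).sub (int_f0'mul hK f f)

end Aux

theorem one_step_energy
    {X : Type*} [MeasurableSpace X] (m : Measure X) [IsFiniteMeasure m]
    (K : ℝ) (hK : 1 ≤ K)
    (V : Submodule ℝ (Lp ℝ 2 m)) (a : V →ₗ[ℝ] V →ₗ[ℝ] ℝ)
    (ha_symm : ∀ u w : V, a u w = a w u)
    (M τ ε βs : ℝ) (hβ : (3*K^2 - 1)/2 ≤ βs)
    (c0 c1 μ1 : V)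
    (h1 : ∀ v : V,
      ∫ x, ((c1 : Lp ℝ 2 m) x - (c0 : Lp ℝ 2 m) x) * (v : Lp ℝ 2 m) x ∂m
        = -(M * τ) * a μ1 v)
    (h2 : ∀ q : V,
      ∫ x, (μ1 : Lp ℝ 2 m) x * (q : Lp ℝ 2 m) x ∂m
        = βs * ∫ x, ((c1 : Lp ℝ 2 m) x - (c0 : Lp ℝ 2 m) x) * (q : Lp ℝ 2 m) x ∂m
          + ∫ x, f0' K ((c0 : Lp ℝ 2 m) x) * (q : Lp ℝ 2 m) x ∂m
          + ε^2 * a c1 q) :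
    discreteEnergy K ε a c1 + (ε^2/2 * a (c1 - c0) (c1 - c0) + M * τ * a μ1 μ1)
      ≤ discreteEnergy K ε a c0 := by
  have hd : (((c1 - c0 : V) : Lp ℝ 2 m) : X → ℝ) =ᵐ[m]
      fun x => (c1 : Lp ℝ 2 m) x - (c0 : Lp ℝ 2 m) x := by
    rw [Submodule.coe_sub]
    filter_upwards [Lp.coeFn_sub (c1 : Lp ℝ 2 m) (c0 : Lp ℝ 2 m)] with x hx
    simpa using hx
  set f : Lp ℝ 2 m := (c0 : Lp ℝ 2 m) with hf
  set g : Lp ℝ 2 m := (c1 : Lp ℝ 2 m) with hg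
  set S : ℝ := ∫ x, (g x - f x)^2 ∂m with hSdef
  have hS : 0 ≤ S := integral_nonneg fun x => sq_nonneg _
  have hA : ∫ x, (g x - f x) * (μ1 : Lp ℝ 2 m) x ∂m = -(M * τ) * a μ1 μ1 := h1 μ1
  have hmc : ∫ x, (μ1 : Lp ℝ 2 m) x * (g x - f x) ∂m
      = ∫ x, (g x - f x) * (μ1 : Lp ℝ 2 m) x ∂m :=
    integral_congr_ae (Filter.Eventually.of_forall fun x => mul_comm _ _)
  have hsq : ∫ x, (g x - f x) * (g x - f x) ∂m = S := by
    rw [hSdef]; exact integral_congr_ae (Filter.Eventually.of_forall fun x => (pow_two _).symm)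
  have hB := h2 (c1 - c0)
  have e1 : ∫ x, (μ1 : Lp ℝ 2 m) x * ((c1 - c0 : V) : Lp ℝ 2 m) x ∂m
      = ∫ x, (μ1 : Lp ℝ 2 m) x * (g x - f x) ∂m :=
    integral_congr_ae (by filter_upwards [hd] with x hx; rw [hx])
  have e2 : ∫ x, (g x - f x) * ((c1 - c0 : V) : Lp ℝ 2 m) x ∂m
      = ∫ x, (g x - f x) * (g x - f x) ∂m :=
    integral_congr_ae (by filter_upwards [hd] with x hx; rw [hx])
  have e3 : ∫ x, f0' K (f x) * ((c1 - c0 : V) : Lp ℝ 2 m) x ∂m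
      = ∫ x, f0' K (f x) * (g x - f x) ∂m :=
    integral_congr_ae (by filter_upwards [hd] with x hx; rw [hx])
  rw [e1, e2, e3, hmc, hA, hsq] at hB
  have hF : ∫ x, f0' K (f x) * (g x - f x) ∂m
      = -(M * τ) * a μ1 μ1 - βs * S - ε^2 * a c1 (c1 - c0) := by linarith
  have hIA : Integrable (fun x => f0' K (f x) * (g x - f x)
      + (3*K^2-1)/2 * (g x - f x)^2) m :=
    (int_f0'_diff hK f g).add ((int_sq_diff f g).const_mul _)
  have hT : ∫ x, f0 K (g x) ∂m
      ≤ ∫ x, f0 K (f x) ∂m + ∫ x, f0' K (f x) * (g x - f x) ∂m + (3*K^2-1)/2 * S := by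
    calc ∫ x, f0 K (g x) ∂m
        ≤ ∫ x, (f0 K (f x) + (f0' K (f x) * (g x - f x) + (3*K^2-1)/2 * (g x - f x)^2)) ∂m := by
          refine integral_mono (int_f0comp hK g) ((int_f0comp hK f).add hIA) fun x => ?_
          have := f0_taylor hK (f x) (g x); dsimp only; linarith
      _ = ∫ x, f0 K (f x) ∂m + (∫ x, f0' K (f x) * (g x - f x) ∂m
            + (3*K^2-1)/2 * ∫ x, (g x - f x)^2 ∂m) := by
          rw [integral_add (int_f0comp hK f) hIA,
              integral_add (int_f0'_diff hK f g) ((int_sq_diff f g).const_mul _),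
              integral_const_mul _ _]
      _ = _ := by rw [hSdef]; ring
  have hsub1 : a c1 (c1 - c0) = a c1 c1 - a c1 c0 := by simp [map_sub]
  have hsub2 : a (c1 - c0) (c1 - c0) = a c1 c1 - 2*(a c1 c0) + a c0 c0 := by
    simp [map_sub, LinearMap.sub_apply, ha_symm c0 c1]; ring
  have hq : ε^2/2 * a c1 c1 - ε^2/2 * a c0 c0
      = ε^2 * a c1 (c1 - c0) - ε^2/2 * a (c1 - c0) (c1 - c0) := by
    rw [hsub1, hsub2]; ring
  have hβS : (3*K^2-1)/2 * S ≤ βs * S := mul_le_mul_of_nonneg_right hβ hS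
  simp only [discreteEnergy]
  linarith [hT, hF, hq, hβS]

/-- Multi-step energy stability for the stabilized semi-implicit scheme. -/
theorem multi_step_energy_stability
    {X : Type*} [MeasurableSpace X] (m : Measure X) [IsFiniteMeasure m]
    (K : ℝ) (hK : 1 ≤ K)
    (V : Submodule ℝ (Lp ℝ 2 m)) (a : V →ₗ[ℝ] V →ₗ[ℝ] ℝ)
    (ha_symm : ∀ u w : V, a u w = a w u)
    (ha_nonneg : ∀ v : V, 0 ≤ a v v)
    (M τ ε βs : ℝ) (hM : 0 < M) (hτ : 0 < τ) (hβ : (3*K^2 - 1)/2 ≤ βs)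
    (N : ℕ) (hN : 1 ≤ N) (c : ℕ → V) (μ : ℕ → V)
    (h1 : ∀ n < N, ∀ v : V,
      ∫ x, ((c (n+1) : Lp ℝ 2 m) x - (c n : Lp ℝ 2 m) x) * (v : Lp ℝ 2 m) x ∂m
        = -(M * τ) * a (μ (n+1)) v)
    (h2 : ∀ n < N, ∀ q : V,
      ∫ x, (μ (n+1) : Lp ℝ 2 m) x * (q : Lp ℝ 2 m) x ∂m
        = βs * ∫ x, ((c (n+1) : Lp ℝ 2 m) x - (c n : Lp ℝ 2 m) x) * (q : Lp ℝ 2 m) x ∂m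
          + ∫ x, f0' K ((c n : Lp ℝ 2 m) x) * (q : Lp ℝ 2 m) x ∂m
          + ε^2 * a (c (n+1)) q) :
    discreteEnergy K ε a (c N)
        + ∑ n ∈ Finset.range N,
            (ε^2/2 * a (c (n+1) - c n) (c (n+1) - c n) + M * τ * a (μ (n+1)) (μ (n+1)))
      ≤ discreteEnergy K ε a (c 0)
    ∧ (∀ n < N, discreteEnergy K ε a (c (n+1)) ≤ discreteEnergy K ε a (c n))
    ∧ M * τ * ∑ n ∈ Finset.range N, a (μ (n+1)) (μ (n+1)) ≤ discreteEnergy K ε a (c 0) := by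
  have step : ∀ n < N, discreteEnergy K ε a (c (n+1))
      + (ε^2/2 * a (c (n+1) - c n) (c (n+1) - c n) + M * τ * a (μ (n+1)) (μ (n+1)))
      ≤ discreteEnergy K ε a (c n) := fun n hn =>
    one_step_energy m K hK V a ha_symm M τ ε βs hβ (c n) (c (n+1)) (μ (n+1)) (h1 n hn) (h2 n hn)
  have tnn : ∀ n : ℕ, 0 ≤ ε^2/2 * a (c (n+1) - c n) (c (n+1) - c n) :=
    fun n => mul_nonneg (by positivity) (ha_nonneg _)
  have mnn : ∀ n : ℕ, 0 ≤ M * τ * a (μ (n+1)) (μ (n+1)) :=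
    fun n => mul_nonneg (by positivity) (ha_nonneg _)
  have main : ∀ n, n ≤ N → discreteEnergy K ε a (c n)
      + ∑ k ∈ Finset.range n, (ε^2/2 * a (c (k+1) - c k) (c (k+1) - c k)
        + M * τ * a (μ (k+1)) (μ (k+1))) ≤ discreteEnergy K ε a (c 0) := by
    intro n
    induction n with
    | zero => intro _; simp
    | succ n ih =>
      intro hn
      have hn' : n < N := hn
      rw [Finset.sum_range_succ]
      have hstep := step n hn'
      have hih := ih (le_of_lt hn')
      linarith
  have Enn : ∀ v : V, 0 ≤ discreteEnergy K ε a v := fun v =>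
    add_nonneg (mul_nonneg (by positivity) (ha_nonneg v))
      (integral_nonneg fun x => f0_nonneg hK _)
  refine ⟨main N le_rfl, fun n hn => ?_, ?_⟩
  · have h := step n hn; have := tnn n; have := mnn n; linarith
  · rw [Finset.mul_sum]
    have hsum : ∑ n ∈ Finset.range N, M * τ * a (μ (n+1)) (μ (n+1))
        ≤ ∑ n ∈ Finset.range N, (ε^2/2 * a (c (n+1) - c n) (c (n+1) - c n)
          + M * τ * a (μ (n+1)) (μ (n+1))) :=
      Finset.sum_le_sum fun k _ => by have := tnn k; linarith
    have hmain := main N le_rfl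
    have hE := Enn (c N)
    linarith
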